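/- For γ = 1, the generating function H₁(z,t) of 1-matchings filtered by genus satisfies P₁(z,t,H₁(z,t)) = 0 where P₁(z,t,X) = −1 + X + 3X²z − 4X³z − 2X⁴z² − X⁴tz² + 6X⁵z² − 2X⁶z³ − 4X⁷z³ + 3X⁸z⁴ + X⁹z⁴ − X¹⁰z⁵. -/

import Mathlib

/-- For `γ = 1`, the genus-filtered generating function `H₁(z,t)` of
`1`-matchings (the power series solution with constant term `1` of
`H - zH² - Is₁(zH²/(1-zH²), t) = 1`, where `Is₁(w,t) = t·w²(1+w)²`)
satisfies `P₁(z,t,H₁(z,t)) = 0` for the explicit degree-10 polynomial `P₁`.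
Here `z = PowerSeries.X`, and `t` is the polynomial variable of the
coefficient ring `ℚ[t]`. -/
theorem P_one_annihilates_H_one (H : PowerSeries (Polynomial ℚ))
    (hconst : PowerSeries.constantCoeff H = 1)
    (heq : ∃ W : PowerSeries (Polynomial ℚ),
      (1 - PowerSeries.X * H ^ 2) * W = PowerSeries.X * H ^ 2 ∧
      H - PowerSeries.X * H ^ 2 -
        PowerSeries.C (Polynomial.X : Polynomial ℚ) * W ^ 2 * (1 + W) ^ 2 = 1) :
    -1 + H + 3 * H ^ 2 * PowerSeries.X - 4 * H ^ 3 * PowerSeries.X -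
      2 * H ^ 4 * PowerSeries.X ^ 2 -
      PowerSeries.C (Polynomial.X : Polynomial ℚ) * H ^ 4 * PowerSeries.X ^ 2 +
      6 * H ^ 5 * PowerSeries.X ^ 2 - 2 * H ^ 6 * PowerSeries.X ^ 3 -
      4 * H ^ 7 * PowerSeries.X ^ 3 + 3 * H ^ 8 * PowerSeries.X ^ 4 +
      H ^ 9 * PowerSeries.X ^ 4 - H ^ 10 * PowerSeries.X ^ 5 = 0 := by
  obtain ⟨W, h1, h2⟩ := heq
  set z := (PowerSeries.X : PowerSeries (Polynomial ℚ)) with hz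
  set t := PowerSeries.C (Polynomial.X : Polynomial ℚ) with ht
  have hA1 : (1 - z * H ^ 2) * (1 + W) = 1 := by linear_combination h1
  have key : (1 - z * H ^ 2) ^ 4 *
      (H - z * H ^ 2 - t * W ^ 2 * (1 + W) ^ 2) = (1 - z * H ^ 2) ^ 4 := by
    rw [h2]; ring
  have key2 : (1 - z * H ^ 2) ^ 4 * (H - z * H ^ 2) - t * (z * H ^ 2) ^ 2 =
      (1 - z * H ^ 2) ^ 4 := by
    linear_combination key +
      t * ((1 - z * H ^ 2) * W) ^ 2 * ((1 - z * H ^ 2) * (1 + W) + 1) * hA1 +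
      t * ((1 - z * H ^ 2) * W + z * H ^ 2) * h1
  linear_combination key2
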